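/- (Fisher's inequality) Any non-trivial (v,k,λ)-design has at least v blocks; equivalently, if a (v,k,λ)-design with 3 ≤ k < v exists, then λ(v−1) ≥ k(k−1). -/

import Mathlib

open Finset

lemma aux_ind_sum {α : Type*} (L : List α) (p : α → Prop) [DecidablePred p] :
    ∑ i : Fin L.length, (if p (L.get i) then (1:ℝ) else 0) = L.countP (fun a => decide (p a)) := by
  induction L with
  | nil => simp
  | cons a L ih =>
    rw [List.countP_cons]
    simp only [List.length_cons, Fin.sum_univ_succ, List.get, List.get_cons_succ']
    rw [ih]
    by_cases h : p a <;> simp [h] <;> ring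

lemma aux_countP (v : ℕ) (𝓑 : Multiset (Finset (Fin v))) (p : Finset (Fin v) → Prop)
    [DecidablePred p] :
    ∑ i : Fin 𝓑.toList.length, (if p (𝓑.toList.get i) then (1:ℝ) else 0) = 𝓑.countP p := by
  rw [aux_ind_sum]
  congr 1
  rw [← Multiset.coe_countP, Multiset.coe_toList]

theorem stmt_8 (v k l : ℕ) (hl : 0 < l) (hk : 3 ≤ k) (hkv : k < v)
    (𝓑 : Multiset (Finset (Fin v)))
    (hblocks : ∀ b ∈ 𝓑, b.card = k)
    (hdes : ∀ u w : Fin v, u ≠ w → 𝓑.countP (fun b => u ∈ b ∧ w ∈ b) = l) :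
    v ≤ Multiset.card 𝓑 ∧ k * (k - 1) ≤ l * (v - 1) := by
  classical
  set L := 𝓑.toList with hL
  set n := L.length with hn
  set f : Fin v → Fin n → ℝ := fun u i => if u ∈ L.get i then 1 else 0 with hf
  have hf2 : ∀ u i, f u i * f u i = f u i := by
    intro u i; simp only [hf]; split <;> ring
  -- pair counts
  have hA : ∀ u w : Fin v, u ≠ w → ∑ i, f u i * f w i = (l : ℝ) := by
    intro u w huw
    have key : ∀ i : Fin n, f u i * f w i
        = if (u ∈ L.get i ∧ w ∈ L.get i) then (1:ℝ) else 0 := by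
      intro i; simp only [hf]; split_ifs <;> simp_all
    rw [Finset.sum_congr rfl (fun i _ => key i)]
    rw [aux_countP v 𝓑 (fun b => u ∈ b ∧ w ∈ b), hdes u w huw]
  -- column sums
  have hB : ∀ i : Fin n, ∑ u, f u i = (k : ℝ) := by
    intro i
    have hmem : L.get i ∈ 𝓑 := by
      rw [← Multiset.mem_toList]; exact L.get_mem i
    have : ∑ u, f u i = ((L.get i).card : ℝ) := by
      simp only [hf, Finset.sum_ite_mem, Finset.univ_inter, Finset.sum_const, nsmul_eq_mul,
        mul_one]
    rw [this, hblocks _ hmem]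
  have hv1 : (1:ℕ) ≤ v := by omega
  -- replication count
  have hR : ∀ u : Fin v, ((k:ℝ) - 1) * (∑ i, f u i) = (l:ℝ) * ((v:ℝ) - 1) := by
    intro u
    have h1 : ∑ w ∈ Finset.univ.erase u, (∑ i, f u i * f w i) = ((v:ℝ) - 1) * l := by
      rw [Finset.sum_congr rfl (fun w hw => hA u w (Ne.symm (Finset.ne_of_mem_erase hw)))]
      rw [Finset.sum_const, Finset.card_erase_of_mem (Finset.mem_univ u), Finset.card_univ,
        Fintype.card_fin, nsmul_eq_mul, Nat.cast_sub hv1]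
      norm_num
    have h2 : ∑ w ∈ Finset.univ.erase u, (∑ i, f u i * f w i)
        = ((k:ℝ) - 1) * (∑ i, f u i) := by
      calc ∑ w ∈ Finset.univ.erase u, ∑ i, f u i * f w i
          = ∑ i, ∑ w ∈ Finset.univ.erase u, f u i * f w i := Finset.sum_comm
        _ = ∑ i, ((k:ℝ) - 1) * f u i := by
            refine Finset.sum_congr rfl fun i _ => ?_
            rw [← Finset.mul_sum, Finset.sum_erase_eq_sub (Finset.mem_univ u), hB i]
            linear_combination (-1 : ℝ) * hf2 u i
        _ = ((k:ℝ) - 1) * ∑ i, f u i := by rw [Finset.mul_sum]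
    rw [← h2, h1]; ring
  -- injectivity of the transpose incidence map
  have hinj : ∀ x : Fin v → ℝ, (∀ i : Fin n, ∑ u, f u i * x u = 0) → x = 0 := by
    intro x hx
    set S := ∑ u, x u with hS
    set S2 := ∑ u, x u * x u with hS2
    have hE : ∑ i : Fin n, (∑ u, f u i * x u) * (∑ u, f u i * x u) = 0 := by
      rw [Finset.sum_congr rfl fun i _ => by rw [hx i, mul_zero], Finset.sum_const, smul_zero]
    have e1 : ∑ i : Fin n, (∑ u, f u i * x u) * (∑ u, f u i * x u)
        = ∑ u, ∑ w, (x u * x w) * (∑ i, f u i * f w i) := by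
      calc ∑ i : Fin n, (∑ u, f u i * x u) * (∑ u, f u i * x u)
          = ∑ i : Fin n, ∑ u, ∑ w, (x u * x w) * (f u i * f w i) := by
            refine Finset.sum_congr rfl fun i _ => ?_
            rw [Finset.sum_mul_sum]
            exact Finset.sum_congr rfl fun u _ => Finset.sum_congr rfl fun w _ => by ring
        _ = ∑ u, ∑ i : Fin n, ∑ w, (x u * x w) * (f u i * f w i) := Finset.sum_comm
        _ = ∑ u, ∑ w, ∑ i : Fin n, (x u * x w) * (f u i * f w i) := by
            exact Finset.sum_congr rfl fun u _ => Finset.sum_comm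
        _ = ∑ u, ∑ w, (x u * x w) * (∑ i, f u i * f w i) := by
            simp [Finset.mul_sum]
    have e2 : ∑ u, ∑ w, (x u * x w) * (∑ i, f u i * f w i)
        = ∑ u, ((x u * x u) * (∑ i, f u i) + (l:ℝ) * (x u * (S - x u))) := by
      refine Finset.sum_congr rfl fun u _ => ?_
      rw [← Finset.add_sum_erase _ _ (Finset.mem_univ u)]
      congr 1
      · congr 1; exact Finset.sum_congr rfl fun i _ => hf2 u i
      · rw [Finset.sum_congr rfl fun w hw =>
          by rw [hA u w (Ne.symm (Finset.ne_of_mem_erase hw))]]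
        rw [← Finset.sum_erase_eq_sub (Finset.mem_univ u) (f := x), Finset.mul_sum,
          Finset.mul_sum]
        exact Finset.sum_congr rfl fun w _ => by ring
    -- multiply by (k-1)
    have key : ((k:ℝ) - 1) * 0 = (l:ℝ) * (((v:ℝ) - (k:ℝ)) * S2 + ((k:ℝ) - 1) * (S * S)) := by
      rw [← hE, e1, e2, Finset.mul_sum]
      have : ∀ u : Fin v, ((k:ℝ)-1) * ((x u * x u) * (∑ i, f u i) + (l:ℝ) * (x u * (S - x u)))
          = (l:ℝ) * (((v:ℝ) - (k:ℝ)) * (x u * x u) + ((k:ℝ)-1) * (x u * S)) := by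
        intro u
        have := hR u
        linear_combination (x u * x u) * this
      rw [Finset.sum_congr rfl fun u _ => this u]
      have expand : ∀ u : Fin v,
          (l:ℝ) * (((v:ℝ) - (k:ℝ)) * (x u * x u) + ((k:ℝ)-1) * (x u * S))
          = ((l:ℝ) * ((v:ℝ) - (k:ℝ))) * (x u * x u) + ((l:ℝ) * ((k:ℝ)-1) * S) * x u := by
        intro u; ring
      rw [Finset.sum_congr rfl fun u _ => expand u, Finset.sum_add_distrib,
        ← Finset.mul_sum, ← Finset.mul_sum, ← hS2, ← hS]
      ring
    have hS2nonneg : 0 ≤ S2 := Finset.sum_nonneg fun u _ => mul_self_nonneg _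
    have hS2zero : S2 = 0 := by
      have hlpos : (0:ℝ) < l := by exact_mod_cast hl
      have hvk : (k:ℝ) < v := by exact_mod_cast hkv
      have hk1 : (1:ℝ) < k := by
        have : (3:ℝ) ≤ k := by exact_mod_cast hk
        linarith
      have hX : ((v:ℝ) - (k:ℝ)) * S2 + ((k:ℝ) - 1) * (S * S) = 0 := by
        have h0 : (l:ℝ) * (((v:ℝ) - (k:ℝ)) * S2 + ((k:ℝ) - 1) * (S * S)) = 0 := by
          linarith [key]
        rcases mul_eq_zero.mp h0 with h | h
        · exact absurd h (ne_of_gt hlpos)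
        · exact h
      nlinarith [mul_self_nonneg S, sub_pos.mpr hvk, sub_pos.mpr hk1, hX, hS2nonneg]
    funext u
    have := (Finset.sum_eq_zero_iff_of_nonneg (fun u _ => mul_self_nonneg (x u))).mp hS2zero u
      (Finset.mem_univ u)
    have := mul_self_eq_zero.mp this
    simpa using this
  -- v ≤ number of blocks, via injectivity
  have hvn : v ≤ n := by
    set Mmat : Matrix (Fin n) (Fin v) ℝ := Matrix.of fun i u => f u i with hM
    have hg : Function.Injective Mmat.mulVecLin := by
      rw [← LinearMap.ker_eq_bot, LinearMap.ker_eq_bot']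
      intro x hgx
      refine hinj x fun i => ?_
      have := congrFun hgx i
      simpa [Matrix.mulVecLin_apply, Matrix.mulVec, dotProduct, hM] using this
    have hle := LinearMap.finrank_le_finrank_of_injective hg
    simpa [Module.finrank_fin_fun] using hle
  have hcard : n = Multiset.card 𝓑 := by
    rw [hn, hL, Multiset.length_toList]
  constructor
  · omega
  · -- total incidence count
    have h1 : ∑ u : Fin v, (∑ i : Fin n, f u i) = (n:ℝ) * k := by
      rw [Finset.sum_comm, Finset.sum_congr rfl fun i _ => hB i, Finset.sum_const,
        Finset.card_univ, Fintype.card_fin, nsmul_eq_mul]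
    have h2 : ∑ u : Fin v, ((k:ℝ) - 1) * (∑ i : Fin n, f u i)
        = (v:ℝ) * ((l:ℝ) * ((v:ℝ) - 1)) := by
      rw [Finset.sum_congr rfl fun u _ => hR u, Finset.sum_const, Finset.card_univ,
        Fintype.card_fin, nsmul_eq_mul]
    have htot : ((k:ℝ) - 1) * ((n:ℝ) * k) = (v:ℝ) * ((l:ℝ) * ((v:ℝ) - 1)) := by
      rw [← h1, Finset.mul_sum, h2]
    have hreal : (k:ℝ) * ((k:ℝ) - 1) ≤ (l:ℝ) * ((v:ℝ) - 1) := by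
      have hnv : (v:ℝ) ≤ (n:ℝ) := by exact_mod_cast hvn
      have hvpos : (0:ℝ) < v := by positivity
      have hk3 : (3:ℝ) ≤ k := by exact_mod_cast hk
      have hkk : (0:ℝ) ≤ ((k:ℝ) - 1) * k := by nlinarith
      have hstep : ((k:ℝ) - 1) * k * v ≤ ((k:ℝ) - 1) * k * n :=
        mul_le_mul_of_nonneg_left hnv hkk
      nlinarith [htot, hstep, hvpos]
    rw [← @Nat.cast_le ℝ]
    push_cast [Nat.cast_sub hv1, Nat.cast_sub (by omega : (1:ℕ) ≤ k)]
    linarith
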